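/- arXiv:2510.22578 — 5 statements merged into one kernel-verified Lean document; each statement's English description precedes it below -/
import Mathlib

section
/- Let 𝔽 ∈ {ℝ, ℂ}, let p ∈ (0,1], let n and k be positive integers with 2k ≤ n, and let x ∈ 𝔽^n. Let T ⊆ {1,…,n} be any set of 2k indices of the 2k largest-magnitude entries of x, i.e., |T| = 2k and |x_i| ≥ |x_j| whenever i ∈ T and j ∉ T. Then ‖x_{T^c}‖₂ ≤ σ_k(x)_p / k^{1/p − 1/2}. -/
open MeasureTheory ProbabilityTheory Real Finset

/-- The `ℓ_q` (quasi-)norm `(∑ i, ‖x i‖^q)^{1/q}` of a vector with entries in `𝕜 ∈ {ℝ, ℂ}`. -/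
noncomputable def lpNorm {ι : Type*} [Fintype ι] {𝕜 : Type*} [RCLike 𝕜] (q : ℝ) (x : ι → 𝕜) : ℝ :=
  (∑ i, ‖x i‖ ^ q) ^ (1 / q)

open Classical in
/-- The number of nonzero entries of a vector. -/
noncomputable def l0Norm {ι : Type*} [Fintype ι] {𝕜 : Type*} [RCLike 𝕜] (x : ι → 𝕜) : ℕ :=
  (Finset.univ.filter fun i => x i ≠ 0).card

/-- The phase distance `dist_q(x,y) = inf_{|c|=1} ‖x - c • y‖_q`. -/
noncomputable def phaseDist {ι : Type*} [Fintype ι] {𝕜 : Type*} [RCLike 𝕜] (q : ℝ)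
    (x y : ι → 𝕜) : ℝ :=
  sInf {d | ∃ c : 𝕜, ‖c‖ = 1 ∧ d = lpNorm q (fun i => x i - c * y i)}

/-- The best `k`-term approximation error `σ_k(x)_q = inf {‖x - z‖_q : ‖z‖₀ ≤ k}`. -/
noncomputable def sigmaK {ι : Type*} [Fintype ι] {𝕜 : Type*} [RCLike 𝕜] (k : ℕ) (q : ℝ)
    (x : ι → 𝕜) : ℝ :=
  sInf {d | ∃ z : ι → 𝕜, l0Norm z ≤ k ∧ d = lpNorm q (fun i => x i - z i)}

/-- The entrywise modulus `|Ax|` of the matrix-vector product `Ax`. -/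
noncomputable def absMv {m n : ℕ} {𝕜 : Type*} [RCLike 𝕜] (A : Fin m → Fin n → 𝕜)
    (x : Fin n → 𝕜) : Fin m → ℝ :=
  fun i => ‖∑ j, A i j * x j‖

/-- `A` satisfies the phaseless bi-Lipschitz condition on `X` with constants `L, U`:
`L·dist(x,y) ≤ ‖|Ax| - |Ay|‖₂ ≤ U·dist(x,y)` for all `x, y ∈ X`. -/
def PhaselessBiLip {m n : ℕ} {𝕜 : Type*} [RCLike 𝕜] (A : Fin m → Fin n → 𝕜)
    (X : Set (Fin n → 𝕜)) (L U : ℝ) : Prop :=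
  ∀ x ∈ X, ∀ y ∈ X,
    L * phaseDist 2 x y ≤ lpNorm 2 (fun i => absMv A x i - absMv A y i) ∧
    lpNorm 2 (fun i => absMv A x i - absMv A y i) ≤ U * phaseDist 2 x y

/-- inequality `key1`: if `T` is a set of `2k` indices of the `2k`
largest-magnitude entries of `x`, then `‖x_{T^c}‖₂ ≤ σ_k(x)_p / k^{1/p - 1/2}`. -/
theorem stmt5 {𝕜 : Type*} [RCLike 𝕜] (p : ℝ) (hp0 : 0 < p) (hp1 : p ≤ 1)
    (n k : ℕ) (hk : 0 < k) (hkn : 2 * k ≤ n) (x : Fin n → 𝕜)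
    (T : Finset (Fin n)) (hT : T.card = 2 * k)
    (hTmax : ∀ i ∈ T, ∀ j ∉ T, ‖x j‖ ≤ ‖x i‖) :
    lpNorm 2 (fun i => if i ∈ T then 0 else x i) ≤ sigmaK k p x / (k : ℝ) ^ (1 / p - 1 / 2) := by
  classical
  have hkpos : (0:ℝ) < k := by exact_mod_cast hk
  have hTne : T.Nonempty := by rw [← Finset.card_pos, hT]; omega
  set t := T.inf' hTne (fun i => ‖x i‖) with ht_def
  have ht0 : 0 ≤ t := Finset.le_inf' hTne _ (fun i _ => norm_nonneg _)
  have hle : ∀ j ∉ T, ‖x j‖ ≤ t := fun j hj =>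
    Finset.le_inf' hTne _ (fun i hi => hTmax i hi j hj)
  have htmem : ∀ i ∈ T, t ≤ ‖x i‖ := fun i hi => Finset.inf'_le _ hi
  set Sp := ∑ j ∈ Tᶜ, ‖x j‖ ^ p with hSp_def
  set S2 := ∑ j ∈ Tᶜ, ‖x j‖ ^ (2:ℝ) with hS2_def
  have hSp0 : 0 ≤ Sp := Finset.sum_nonneg fun j _ => Real.rpow_nonneg (norm_nonneg _) _
  have hS20 : 0 ≤ S2 := Finset.sum_nonneg fun j _ => Real.rpow_nonneg (norm_nonneg _) _
  have hbase0 : (0:ℝ) ≤ (k:ℝ) * t ^ p + Sp :=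
    add_nonneg (mul_nonneg (le_of_lt hkpos) (Real.rpow_nonneg ht0 _)) hSp0
  have htail : lpNorm 2 (fun i => if i ∈ T then (0:𝕜) else x i) = S2 ^ (1/(2:ℝ)) := by
    unfold _root_.lpNorm
    congr 1
    rw [hS2_def, ← Finset.sum_subset (Finset.subset_univ Tᶜ)
        (fun i _ hi => by
          rw [Finset.mem_compl, not_not] at hi
          simp only [hi, if_true]
          simp [Real.zero_rpow (by norm_num : (2:ℝ) ≠ 0)])]
    refine Finset.sum_congr rfl (fun i hi => ?_)
    rw [Finset.mem_compl] at hi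
    simp only [hi, if_false]
  have h2 : S2 ≤ t ^ (2 - p) * Sp := by
    rw [hS2_def, hSp_def, Finset.mul_sum]
    refine Finset.sum_le_sum fun j hj => ?_
    rw [Finset.mem_compl] at hj
    have hxj : ‖x j‖ ≤ t := hle j hj
    calc ‖x j‖ ^ (2:ℝ) = ‖x j‖ ^ (2 - p) * ‖x j‖ ^ p := by
          rw [← Real.rpow_add' (norm_nonneg _) (by ring_nf; norm_num)]
          norm_num
      _ ≤ t ^ (2-p) * ‖x j‖ ^ p :=
          mul_le_mul_of_nonneg_right (Real.rpow_le_rpow (norm_nonneg _) hxj (by linarith))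
            (Real.rpow_nonneg (norm_nonneg _) _)
  have key : ∀ z : Fin n → 𝕜, l0Norm z ≤ k →
      ((k:ℝ) * t ^ p + Sp) ^ (1/p) ≤ lpNorm p (fun i => x i - z i) := by
    intro z hz
    set S := Finset.univ.filter (fun i => z i ≠ 0) with hS_def
    have hScard : S.card ≤ k := by
      rw [hS_def]
      unfold l0Norm at hz
      convert hz using 3
    have hzS : ∀ i ∉ S, z i = 0 := by
      intro i hi
      by_contra h
      exact hi (by simp [hS_def, h])
    have h1 : (T \ S).card + (T ∩ S).card = T.card := Finset.card_sdiff_add_card_inter T S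
    have h2' : (S \ T).card + (S ∩ T).card = S.card := Finset.card_sdiff_add_card_inter S T
    have hTS : (T ∩ S).card = (S ∩ T).card := by rw [Finset.inter_comm]
    have hcard : k + (S \ T).card ≤ (T \ S).card := by omega
    have htp0 : (0:ℝ) ≤ t ^ p := Real.rpow_nonneg ht0 _
    have hsum : (k:ℝ) * t ^ p + Sp ≤ ∑ i, ‖x i - z i‖ ^ p := by
      have hdisj : Disjoint (T \ S) (Tᶜ \ S) :=
        Finset.disjoint_of_subset_left Finset.sdiff_subset
          (Finset.disjoint_of_subset_right Finset.sdiff_subset disjoint_compl_right)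
      have hsub : ∑ i ∈ (T \ S), ‖x i - z i‖ ^ p + ∑ i ∈ (Tᶜ \ S), ‖x i - z i‖ ^ p
          ≤ ∑ i, ‖x i - z i‖ ^ p := by
        rw [← Finset.sum_union hdisj]
        exact Finset.sum_le_sum_of_subset_of_nonneg (Finset.subset_univ _)
          (fun i _ _ => Real.rpow_nonneg (norm_nonneg _) _)
      have hA : (((T \ S).card : ℝ)) * t ^ p ≤ ∑ i ∈ T \ S, ‖x i - z i‖ ^ p := by
        have := Finset.card_nsmul_le_sum (T \ S) (fun i => ‖x i - z i‖ ^ p) (t ^ p)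
          (fun i hi => by
            rw [Finset.mem_sdiff] at hi
            show t ^ p ≤ ‖x i - z i‖ ^ p
            rw [hzS i hi.2, sub_zero]
            exact Real.rpow_le_rpow ht0 (htmem i hi.1) (le_of_lt hp0))
        simpa [nsmul_eq_mul] using this
      have hB : ∑ j ∈ S \ T, ‖x j‖ ^ p ≤ (((S \ T).card : ℝ)) * t ^ p := by
        have := Finset.sum_le_card_nsmul (S \ T) (fun j => ‖x j‖ ^ p) (t ^ p)
          (fun j hj => by
            rw [Finset.mem_sdiff] at hj
            show ‖x j‖ ^ p ≤ t ^ p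
            exact Real.rpow_le_rpow (norm_nonneg _) (hle j hj.2) (le_of_lt hp0))
        simpa [nsmul_eq_mul] using this
      have hC : ∑ i ∈ Tᶜ \ S, ‖x i - z i‖ ^ p = ∑ i ∈ Tᶜ \ S, ‖x i‖ ^ p :=
        Finset.sum_congr rfl (fun i hi => by
          rw [Finset.mem_sdiff] at hi
          rw [hzS i hi.2, sub_zero])
      have hST : S \ T = Tᶜ ∩ S := by
        ext i; simp [Finset.mem_sdiff, Finset.mem_compl, Finset.mem_inter, and_comm]
      have hD : ∑ i ∈ Tᶜ ∩ S, ‖x i‖ ^ p + ∑ i ∈ Tᶜ \ S, ‖x i‖ ^ p = Sp := by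
        rw [hSp_def]; exact Finset.sum_inter_add_sum_sdiff Tᶜ S _
      have hcast : ((k:ℝ) + ((S \ T).card : ℝ)) * t ^ p ≤ (((T \ S).card : ℝ)) * t ^ p := by
        apply mul_le_mul_of_nonneg_right _ htp0
        exact_mod_cast hcard
      rw [hST] at hB
      rw [hST, add_mul] at hcast
      linarith [hA, hB, hsub, hC.ge, hC.le]
    have hfin : ((k:ℝ) * t ^ p + Sp) ^ (1/p) ≤ (∑ i, ‖x i - z i‖ ^ p) ^ (1/p) :=
      Real.rpow_le_rpow hbase0 hsum (by positivity)
    simpa [_root_.lpNorm] using hfin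
  have hexp : (k:ℝ) ^ (1/p - 1/2) * S2 ^ (1/(2:ℝ)) ≤ ((k:ℝ) * t ^ p + Sp) ^ (1/p) := by
    have he0 : (0:ℝ) ≤ (2 - p)/(2*p) := div_nonneg (by linarith) (by linarith)
    calc (k:ℝ)^(1/p-1/2) * S2^(1/(2:ℝ))
        ≤ (k:ℝ)^(1/p-1/2) * (t^(2-p) * Sp)^(1/(2:ℝ)) :=
          mul_le_mul_of_nonneg_left (Real.rpow_le_rpow hS20 h2 (by norm_num))
            (Real.rpow_nonneg (le_of_lt hkpos) _)
      _ = ((k:ℝ) * t^p)^((2-p)/(2*p)) * Sp^(1/(2:ℝ)) := by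
          rw [Real.mul_rpow (Real.rpow_nonneg ht0 _) hSp0,
            Real.mul_rpow (le_of_lt hkpos) (Real.rpow_nonneg ht0 _)]
          have h1 : (t^(2-p):ℝ)^(1/(2:ℝ)) = (t^p)^((2-p)/(2*p)) := by
            rw [← Real.rpow_mul ht0, ← Real.rpow_mul ht0]
            congr 1
            field_simp
          have hee : (1/p - 1/2 : ℝ) = (2-p)/(2*p) := by
            field_simp
          have h2' : (k:ℝ)^(1/p - 1/2) = (k:ℝ)^((2-p)/(2*p)) := by rw [hee]
          rw [h1, h2']
          ring
      _ ≤ ((k:ℝ)*t^p + Sp)^((2-p)/(2*p)) * ((k:ℝ)*t^p + Sp)^(1/(2:ℝ)) := by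
          apply mul_le_mul
          · exact Real.rpow_le_rpow (mul_nonneg (le_of_lt hkpos) (Real.rpow_nonneg ht0 _))
              (le_add_of_nonneg_right hSp0) he0
          · exact Real.rpow_le_rpow hSp0
              (le_add_of_nonneg_left (mul_nonneg (le_of_lt hkpos) (Real.rpow_nonneg ht0 _)))
              (by norm_num)
          · exact Real.rpow_nonneg hSp0 _
          · exact Real.rpow_nonneg hbase0 _
      _ = ((k:ℝ)*t^p + Sp)^(1/p) := by
          rw [← Real.rpow_add' hbase0 (by positivity)]
          congr 1
          field_simp
          ring
  have hmem : lpNorm p x ∈ {d | ∃ z : Fin n → 𝕜, l0Norm z ≤ k ∧ d = lpNorm p (fun i => x i - z i)} :=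
    ⟨0, by simp [l0Norm], by simp⟩
  have hsig : (k:ℝ)^(1/p-1/2) * lpNorm 2 (fun i => if i ∈ T then (0:𝕜) else x i) ≤ sigmaK k p x := by
    apply le_csInf ⟨_, hmem⟩
    rintro d ⟨z, hz, rfl⟩
    rw [htail]
    exact le_trans hexp (key z hz)
  have hkpow : (0:ℝ) < (k:ℝ) ^ (1/p - 1/2) := Real.rpow_pos_of_pos hkpos _
  rw [le_div_iff₀ hkpow]
  calc lpNorm 2 (fun i => if i ∈ T then (0:𝕜) else x i) * (k:ℝ)^(1/p-1/2)
      = (k:ℝ)^(1/p-1/2) * lpNorm 2 (fun i => if i ∈ T then (0:𝕜) else x i) := mul_comm _ _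
    _ ≤ sigmaK k p x := hsig
end

section
/- Let 𝔽 ∈ {ℝ, ℂ}, let p ∈ (0,1], let n be a positive integer, and let x, x♯ ∈ 𝔽^n satisfy ∑_{i=1}^n |x♯_i|^p ≤ ∑_{i=1}^n |x_i|^p. Let T ⊆ S ⊆ {1,…,n} be index sets and set h := x♯ − x_T. Then ∑_{i ∉ S} |h_i|^p ≤ ∑_{i ∈ S} |h_i|^p + ∑_{i ∉ T} |x_i|^p. -/
open MeasureTheory ProbabilityTheory Real Finset

lemma add_rpow_le {a b p : ℝ} (ha : 0 ≤ a) (hb : 0 ≤ b) (hp0 : 0 ≤ p) (hp1 : p ≤ 1) :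
    (a + b) ^ p ≤ a ^ p + b ^ p := by
  have := NNReal.rpow_add_le_add_rpow a.toNNReal b.toNNReal hp0 hp1
  have h2 := NNReal.coe_le_coe.mpr this
  rw [NNReal.coe_rpow, NNReal.coe_add, NNReal.coe_add, NNReal.coe_rpow, NNReal.coe_rpow, Real.coe_toNNReal _ ha, Real.coe_toNNReal _ hb] at h2
  simpa using h2

/-- inequality `temp_comb11`: if `‖x♯‖_p^p ≤ ‖x‖_p^p`, `T ⊆ S` and
`h := x♯ - x_T`, then `∑_{i ∉ S} |h_i|^p ≤ ∑_{i ∈ S} |h_i|^p + ∑_{i ∉ T} |x_i|^p`. -/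
theorem stmt6 {𝕜 : Type*} [RCLike 𝕜] (p : ℝ) (hp0 : 0 < p) (hp1 : p ≤ 1)
    (n : ℕ) (hn : 0 < n) (x xs : Fin n → 𝕜)
    (hmin : ∑ i, ‖xs i‖ ^ p ≤ ∑ i, ‖x i‖ ^ p)
    (T S : Finset (Fin n)) (hTS : T ⊆ S) :
    ∑ i ∈ Sᶜ, ‖xs i - (if i ∈ T then x i else 0)‖ ^ p ≤
      ∑ i ∈ S, ‖xs i - (if i ∈ T then x i else 0)‖ ^ p + ∑ i ∈ Tᶜ, ‖x i‖ ^ p := by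
  set h : Fin n → ℝ := fun i => ‖xs i - (if i ∈ T then x i else 0)‖ ^ p with hh
  have hnonneg : ∀ (f : Fin n → 𝕜) i, 0 ≤ ‖f i‖ ^ p := fun f i =>
    Real.rpow_nonneg (norm_nonneg _) _
  -- On Sᶜ, h i = ‖xs i‖ ^ p (since i ∉ T)
  have hSc : ∑ i ∈ Sᶜ, h i = ∑ i ∈ Sᶜ, ‖xs i‖ ^ p := by
    apply Finset.sum_congr rfl
    intro i hi
    have : i ∉ T := fun hT => (Finset.mem_compl.mp hi) (hTS hT)
    simp [hh, this]
  -- key: ∑_T ‖x‖^p ≤ ∑_T ‖xs‖^p + ∑_T h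
  have hkey : ∑ i ∈ T, ‖x i‖ ^ p ≤ ∑ i ∈ T, ‖xs i‖ ^ p + ∑ i ∈ T, h i := by
    rw [← Finset.sum_add_distrib]
    apply Finset.sum_le_sum
    intro i hi
    have h1 : ‖x i‖ ≤ ‖xs i‖ + ‖xs i - x i‖ := by
      calc ‖x i‖ = ‖xs i - (xs i - x i)‖ := by ring_nf
        _ ≤ ‖xs i‖ + ‖xs i - x i‖ := norm_sub_le _ _
    calc ‖x i‖ ^ p ≤ (‖xs i‖ + ‖xs i - x i‖) ^ p :=
          Real.rpow_le_rpow (norm_nonneg _) h1 hp0.le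
      _ ≤ ‖xs i‖ ^ p + ‖xs i - x i‖ ^ p :=
          add_rpow_le (norm_nonneg _) (norm_nonneg _) hp0.le hp1
      _ = ‖xs i‖ ^ p + h i := by simp [hh, hi]
  have hsplitS : ∑ i, ‖xs i‖ ^ p = ∑ i ∈ S, ‖xs i‖ ^ p + ∑ i ∈ Sᶜ, ‖xs i‖ ^ p :=
    (Finset.sum_add_sum_compl S _).symm
  have hsplitT : ∑ i, ‖x i‖ ^ p = ∑ i ∈ T, ‖x i‖ ^ p + ∑ i ∈ Tᶜ, ‖x i‖ ^ p :=
    (Finset.sum_add_sum_compl T _).symm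
  have hTsubS : ∑ i ∈ T, ‖xs i‖ ^ p ≤ ∑ i ∈ S, ‖xs i‖ ^ p :=
    Finset.sum_le_sum_of_subset_of_nonneg hTS (fun i _ _ => hnonneg xs i)
  have hhsub : ∑ i ∈ T, h i ≤ ∑ i ∈ S, h i :=
    Finset.sum_le_sum_of_subset_of_nonneg hTS (fun i _ _ => Real.rpow_nonneg (norm_nonneg _) _)
  -- combine
  have : ∑ i ∈ S, ‖xs i‖ ^ p + ∑ i ∈ Sᶜ, ‖xs i‖ ^ p ≤
      ∑ i ∈ T, ‖xs i‖ ^ p + ∑ i ∈ T, h i + ∑ i ∈ Tᶜ, ‖x i‖ ^ p := by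
    rw [← hsplitS]
    calc ∑ i, ‖xs i‖ ^ p ≤ ∑ i, ‖x i‖ ^ p := hmin
      _ = ∑ i ∈ T, ‖x i‖ ^ p + ∑ i ∈ Tᶜ, ‖x i‖ ^ p := hsplitT
      _ ≤ ∑ i ∈ T, ‖xs i‖ ^ p + ∑ i ∈ T, h i + ∑ i ∈ Tᶜ, ‖x i‖ ^ p := by linarith
  rw [hSc]
  linarith
end

section
/- Let 𝔽 ∈ {ℝ, ℂ}. For every constant c₀ > 0 there exists a constant γ > 0, depending only on c₀, with the following property: if m < n are positive integers, k ∈ {1,…,n}, A ∈ 𝔽^{m×n} is any matrix, and Δ : ℝ^m → 𝔽^n is any map satisfying dist(Δ(|Ax|), x) ≤ c₀·σ_k(x)₂ for all x ∈ 𝔽^n, then m ≥ γ·n. -/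
open MeasureTheory ProbabilityTheory Real Finset

section aux
variable {ι : Type*} [Fintype ι] {𝕜 : Type*} [RCLike 𝕜]

lemma lpNorm_two_eq (x : ι → 𝕜) : lpNorm 2 x = Real.sqrt (∑ i, ‖x i‖ ^ 2) := by
  unfold _root_.lpNorm
  rw [Real.sqrt_eq_rpow]
  congr 1
  exact Finset.sum_congr rfl fun i _ => by
    rw [← Real.rpow_natCast (‖x i‖) 2]; norm_num

lemma lpNorm_nonneg' (x : ι → 𝕜) : 0 ≤ lpNorm 2 x := by
  rw [lpNorm_two_eq]; exact Real.sqrt_nonneg _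

lemma sigmaK_nonneg (k : ℕ) (x : ι → 𝕜) : 0 ≤ sigmaK k 2 x := by
  apply le_csInf
  · exact ⟨lpNorm 2 (fun i => x i - 0), ⟨0, by simp [l0Norm], rfl⟩⟩
  · rintro d ⟨z, -, rfl⟩; exact lpNorm_nonneg' _

lemma sigmaK_bddBelow (k : ℕ) (x : ι → 𝕜) :
    BddBelow {d | ∃ z : ι → 𝕜, l0Norm z ≤ k ∧ d = lpNorm 2 (fun i => x i - z i)} := by
  refine ⟨0, ?_⟩; rintro d ⟨z, -, rfl⟩; exact lpNorm_nonneg' _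

lemma phaseDist_eq_of_const (x y : ι → 𝕜) (r : ℝ)
    (h : ∀ c : 𝕜, ‖c‖ = 1 → lpNorm 2 (fun i => x i - c * y i) = r) :
    phaseDist 2 x y = r := by
  have hne : ({d | ∃ c : 𝕜, ‖c‖ = 1 ∧ d = lpNorm 2 (fun i => x i - c * y i)}).Nonempty :=
    ⟨lpNorm 2 (fun i => x i - 1 * y i), ⟨1, norm_one, rfl⟩⟩
  apply le_antisymm
  · exact csInf_le ⟨0, by rintro d ⟨c, hc, rfl⟩; exact lpNorm_nonneg' _⟩
      ⟨1, norm_one, (h 1 norm_one).symm⟩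
  · apply le_csInf hne
    rintro d ⟨c, hc, rfl⟩
    exact (h c hc).ge

end aux

lemma key {𝕜 : Type*} [RCLike 𝕜] {m n : ℕ} (A : Fin m → Fin n → 𝕜)
    (Δ : (Fin m → ℝ) → Fin n → 𝕜) (c₀ C : ℝ) (hc₀ : 0 < c₀) (hC : c₀ ≤ C) (k : ℕ) (hk : 1 ≤ k)
    (hyp : ∀ x : Fin n → 𝕜, phaseDist 2 (Δ (absMv A x)) x ≤ c₀ * sigmaK k 2 x)
    (v : Fin n → 𝕜) (hv : ∀ i, ∑ j, A i j * v j = 0) (i : Fin n) :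
    ∑ j, ‖v j‖ ^ 2 ≤ C ^ 2 * (∑ j, ‖v j‖ ^ 2 - ‖v i‖ ^ 2) := by
  classical
  -- Δ at the zero measurement is zero
  set z := Δ (absMv A (0 : Fin n → 𝕜)) with hz
  have hsig0 : sigmaK k 2 (0 : Fin n → 𝕜) = 0 := by
    apply le_antisymm
    · apply csInf_le (sigmaK_bddBelow k 0)
      refine ⟨0, by simp [l0Norm], ?_⟩
      rw [lpNorm_two_eq]; simp
    · exact sigmaK_nonneg k 0
  have hpd0 : phaseDist 2 z (0 : Fin n → 𝕜) = lpNorm 2 z := by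
    apply phaseDist_eq_of_const
    intro c hc
    congr 1
    funext j; simp
  have hz0 : ∀ j, z j = 0 := by
    have h1 := hyp 0
    rw [hpd0, hsig0, mul_zero] at h1
    have h2 : lpNorm 2 z = 0 := le_antisymm h1 (lpNorm_nonneg' z)
    rw [lpNorm_two_eq] at h2
    have h3 : ∑ j, ‖z j‖ ^ 2 = 0 := by
      have := Real.sqrt_eq_zero'.mp h2
      have h4 : (0:ℝ) ≤ ∑ j, ‖z j‖ ^ 2 :=
        Finset.sum_nonneg fun j _ => sq_nonneg _
      linarith [this]
    intro j
    have := (Finset.sum_eq_zero_iff_of_nonneg (fun j _ => sq_nonneg ‖z j‖)).mp h3 j (mem_univ j)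
    simpa using this
  -- measurements of v agree with measurements of 0
  have hmeas : absMv A v = absMv A (0 : Fin n → 𝕜) := by
    funext r; simp [absMv, hv r]
  -- phaseDist (Δ (absMv A v)) v = lpNorm 2 v
  have hpdv : phaseDist 2 (Δ (absMv A v)) v = lpNorm 2 v := by
    rw [hmeas, ← hz]
    apply phaseDist_eq_of_const
    intro c hc
    rw [lpNorm_two_eq, lpNorm_two_eq]
    congr 1
    refine Finset.sum_congr rfl fun j _ => ?_
    rw [hz0 j, zero_sub, norm_neg, norm_mul, hc, one_mul]
  -- one-sparse approximation
  set zi : Fin n → 𝕜 := fun j => if j = i then v i else 0 with hzi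
  have hcard : l0Norm zi ≤ k := by
    refine le_trans ?_ hk
    unfold l0Norm
    have hsub : (Finset.univ.filter fun j => zi j ≠ 0) ⊆ {i} := by
      intro j hj
      simp only [Finset.mem_filter, hzi] at hj
      by_contra hji
      simp only [Finset.mem_singleton] at hji
      exact hj.2 (by simp [hji])
    simpa using Finset.card_le_card hsub
  have hsigle : sigmaK k 2 v ≤ lpNorm 2 (fun j => v j - zi j) :=
    csInf_le (sigmaK_bddBelow k v) ⟨zi, hcard, rfl⟩
  have hchain : lpNorm 2 v ≤ C * lpNorm 2 (fun j => v j - zi j) := by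
    calc lpNorm 2 v ≤ c₀ * sigmaK k 2 v := by rw [← hpdv]; exact hyp v
    _ ≤ C * lpNorm 2 (fun j => v j - zi j) :=
        mul_le_mul hC hsigle (sigmaK_nonneg k v) (le_trans hc₀.le hC)
  -- compute the right-hand sum
  have hsumz : ∑ j, ‖v j - zi j‖ ^ 2 = ∑ j, ‖v j‖ ^ 2 - ‖v i‖ ^ 2 := by
    have h1 : ∀ j, ‖v j - zi j‖ ^ 2 = if j = i then 0 else ‖v j‖ ^ 2 := by
      intro j
      by_cases hji : j = i <;> simp [hzi, hji]
    rw [Finset.sum_congr rfl fun j _ => h1 j]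
    have h2 : ∀ j, (if j = i then (0:ℝ) else ‖v j‖ ^ 2) = ‖v j‖ ^ 2 - (if j = i then ‖v i‖ ^ 2 else 0) := by
      intro j; by_cases hji : j = i <;> simp [hji]
    rw [Finset.sum_congr rfl fun j _ => h2 j, Finset.sum_sub_distrib, Finset.sum_ite_eq' Finset.univ i]
    simp
  -- square the chain inequality
  have hT : (0:ℝ) ≤ ∑ j, ‖v j‖ ^ 2 - ‖v i‖ ^ 2 := by
    rw [← hsumz]; exact Finset.sum_nonneg fun j _ => sq_nonneg _
  have hL : lpNorm 2 v ^ 2 = ∑ j, ‖v j‖ ^ 2 := by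
    rw [lpNorm_two_eq, Real.sq_sqrt (Finset.sum_nonneg fun j _ => sq_nonneg _)]
  have hR : (lpNorm 2 (fun j => v j - zi j)) ^ 2 = ∑ j, ‖v j‖ ^ 2 - ‖v i‖ ^ 2 := by
    rw [lpNorm_two_eq, Real.sq_sqrt (Finset.sum_nonneg fun j _ => sq_nonneg _), hsumz]
  calc ∑ j, ‖v j‖ ^ 2 = lpNorm 2 v ^ 2 := hL.symm
  _ ≤ (C * lpNorm 2 (fun j => v j - zi j)) ^ 2 :=
      pow_le_pow_left₀ (lpNorm_nonneg' v) hchain 2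
  _ = C ^ 2 * (∑ j, ‖v j‖ ^ 2 - ‖v i‖ ^ 2) := by rw [mul_pow, hR]

set_option maxHeartbeats 1000000 in
/-- Proposition `thm:bad_22`: if a decoder `Δ` achieves uniform
`(2,2)`-instance optimality `dist(Δ(|Ax|), x) ≤ c₀·σ_k(x)₂` for all `x ∈ 𝔽^n` with `m < n`,
then `m ≥ γ·n` for a constant `γ > 0` depending only on `c₀`. -/
theorem stmt11 {𝕜 : Type*} [RCLike 𝕜] (c₀ : ℝ) (hc₀ : 0 < c₀) :
    ∃ γ : ℝ, 0 < γ ∧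
      ∀ m n k : ℕ, 0 < m → m < n → 1 ≤ k → k ≤ n →
        ∀ (A : Fin m → Fin n → 𝕜) (Δ : (Fin m → ℝ) → (Fin n → 𝕜)),
          (∀ x : Fin n → 𝕜, phaseDist 2 (Δ (absMv A x)) x ≤ c₀ * sigmaK k 2 x) →
          γ * n ≤ m := by
  classical
  set C := max c₀ 1 with hCdef
  have hC1 : (1:ℝ) ≤ C := le_max_right _ _
  have hc₀C : c₀ ≤ C := le_max_left _ _
  have hC0 : (0:ℝ) < C := lt_of_lt_of_le one_pos hC1
  have hC2 : (0:ℝ) < C ^ 2 := by positivity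
  refine ⟨(C ^ 2)⁻¹, by positivity, ?_⟩
  intro m n k hm hmn hk hkn A Δ hyp
  -- the kernel of A as a subspace of Euclidean space
  set f : EuclideanSpace 𝕜 (Fin n) →ₗ[𝕜] (Fin m → 𝕜) :=
    (Matrix.mulVecLin (Matrix.of A)) ∘ₗ (WithLp.linearEquiv 2 𝕜 (Fin n → 𝕜)).toLinearMap with hf
  set N := LinearMap.ker f with hN
  set d := Module.finrank 𝕜 N with hd
  -- rank-nullity gives n ≤ d + m
  have hrank : n ≤ d + m := by
    have h1 := LinearMap.finrank_range_add_finrank_ker f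
    have h2 : Module.finrank 𝕜 (EuclideanSpace 𝕜 (Fin n)) = n := finrank_euclideanSpace_fin
    have h3 : Module.finrank 𝕜 (LinearMap.range f) ≤ m := by
      have := Submodule.finrank_le (LinearMap.range f)
      simpa [Module.finrank_fin_fun] using this
    have hdk : d = Module.finrank 𝕜 (LinearMap.ker f) := rfl
    rw [h2] at h1
    omega
  -- kernel membership means kernel of the matrix
  have hker : ∀ w : N, ∀ r : Fin m, ∑ j, A r j * (w : EuclideanSpace 𝕜 (Fin n)) j = 0 := by
    intro w r
    have h1 : f (w : EuclideanSpace 𝕜 (Fin n)) = 0 := w.2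
    exact congrFun h1 r
  -- orthonormal basis of the kernel
  let b := stdOrthonormalBasis 𝕜 N
  set s : Fin n → ℝ := fun i => ∑ l, ‖((b l : N) : EuclideanSpace 𝕜 (Fin n)) i‖ ^ 2 with hs
  have hs0 : ∀ i, 0 ≤ s i := fun i => Finset.sum_nonneg fun l _ => sq_nonneg _
  -- the trace identity : ∑ i, s i = d
  have htrace : ∑ i, s i = (d : ℝ) := by
    rw [hs, Finset.sum_comm]
    have h1 : ∀ l, ∑ i, ‖((b l : N) : EuclideanSpace 𝕜 (Fin n)) i‖ ^ 2 = 1 := by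
      intro l
      have h2 : ‖(b l : N)‖ = 1 := b.orthonormal.1 l
      have h3 : ‖((b l : N) : EuclideanSpace 𝕜 (Fin n))‖ = 1 := by
        rw [← Submodule.norm_coe] at h2; exact h2
      have h4 := EuclideanSpace.norm_eq ((b l : N) : EuclideanSpace 𝕜 (Fin n))
      rw [h3] at h4
      have h5 : Real.sqrt (∑ i, ‖((b l : N) : EuclideanSpace 𝕜 (Fin n)) i‖ ^ 2) = 1 := h4.symm
      nlinarith [Real.sq_sqrt (Finset.sum_nonneg fun i (_ : i ∈ Finset.univ) =>
        sq_nonneg ‖((b l : N) : EuclideanSpace 𝕜 (Fin n)) i‖), h5]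
    rw [Finset.sum_congr rfl fun l _ => h1 l]
    simp [hd]
  -- the pointwise bound : s i ≤ 1 - (C^2)⁻¹
  have hpoint : ∀ i, s i ≤ 1 - (C ^ 2)⁻¹ := by
    intro i
    set c : Fin (Module.finrank 𝕜 N) → 𝕜 :=
      fun l => (starRingEnd 𝕜) (((b l : N) : EuclideanSpace 𝕜 (Fin n)) i) with hc
    set w : N := ∑ l, c l • b l with hw
    set v : Fin n → 𝕜 := fun j => ((w : N) : EuclideanSpace 𝕜 (Fin n)) j with hv
    have hvcoord : ∀ j, v j = ∑ l, c l * ((b l : N) : EuclideanSpace 𝕜 (Fin n)) j := by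
      intro j
      have h1 : ((w : N) : EuclideanSpace 𝕜 (Fin n)) =
          ∑ l, c l • ((b l : N) : EuclideanSpace 𝕜 (Fin n)) := by
        rw [hw]; simp
      let P : EuclideanSpace 𝕜 (Fin n) →ₗ[𝕜] 𝕜 :=
        (LinearMap.proj j) ∘ₗ (WithLp.linearEquiv 2 𝕜 (Fin n → 𝕜)).toLinearMap
      have hP : ∀ x : EuclideanSpace 𝕜 (Fin n), P x = x j := fun _ => rfl
      have h2 := congrArg P h1
      rw [map_sum] at h2
      calc v j = P ((w : N) : EuclideanSpace 𝕜 (Fin n)) := rfl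
      _ = ∑ l, P (c l • ((b l : N) : EuclideanSpace 𝕜 (Fin n))) := h2
      _ = ∑ l, c l * ((b l : N) : EuclideanSpace 𝕜 (Fin n)) j :=
          Finset.sum_congr rfl fun l _ => by rw [_root_.map_smul, hP, smul_eq_mul]
    have hvi : v i = ((s i : ℝ) : 𝕜) := by
      rw [hvcoord i, hs]
      push_cast
      refine Finset.sum_congr rfl fun l _ => ?_
      rw [hc]
      exact_mod_cast RCLike.conj_mul _
    have hnormvi : ‖v i‖ ^ 2 = s i ^ 2 := by
      rw [hvi]
      rw [RCLike.norm_ofReal, abs_of_nonneg (hs0 i)]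
    have hS : ∑ j, ‖v j‖ ^ 2 = s i := by
      have h1 : ∑ j, ‖v j‖ ^ 2 = ‖w‖ ^ 2 := by
        have h2 := EuclideanSpace.norm_eq ((w : N) : EuclideanSpace 𝕜 (Fin n))
        rw [Submodule.norm_coe] at h2
        rw [h2, Real.sq_sqrt (Finset.sum_nonneg fun j _ => sq_nonneg _)]
      have h4 : (RCLike.re (inner 𝕜 w w)) = ‖w‖ ^ 2 := inner_self_eq_norm_sq (𝕜 := 𝕜) w
      have h5 : (inner 𝕜 w w) = ∑ l, (starRingEnd 𝕜) (c l) * c l := by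
        rw [hw]
        exact b.orthonormal.inner_sum c c Finset.univ
      have h6 : (RCLike.re (inner 𝕜 w w)) = s i := by
        rw [h5]
        rw [map_sum]
        rw [hs]
        refine Finset.sum_congr rfl fun l _ => ?_
        rw [RCLike.conj_mul (c l), ← RCLike.ofReal_pow, RCLike.ofReal_re, hc]
        rw [RCLike.norm_conj]
      rw [h1, ← h4, h6]
    have hkey := key A Δ c₀ C hc₀ hc₀C k hk hyp v (fun r => hker w r) i
    rw [hS, hnormvi] at hkey
    -- hkey : s i ≤ C^2 * (s i - s i^2)
    rcases eq_or_lt_of_le (hs0 i) with h0 | h0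
    · rw [← h0]
      have : (C ^ 2)⁻¹ ≤ 1 := by
        rw [inv_le_one_iff₀]; right; nlinarith
      linarith
    · have h7 : C ^ 2 * s i ^ 2 ≤ (C ^ 2 - 1) * s i := by nlinarith
      have h8 : C ^ 2 * s i ≤ C ^ 2 - 1 := by
        have := (mul_le_mul_iff_of_pos_right h0).mp (by nlinarith : (C ^ 2 * s i) * s i ≤ (C ^ 2 - 1) * s i)
        exact this
      have h9 : s i ≤ (C ^ 2 - 1) / C ^ 2 := by
        rw [le_div_iff₀ hC2]; linarith [h8]
      calc s i ≤ (C ^ 2 - 1) / C ^ 2 := h9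
      _ = 1 - (C ^ 2)⁻¹ := by field_simp
  -- combine
  have hfinal : (d : ℝ) ≤ n * (1 - (C ^ 2)⁻¹) := by
    rw [← htrace]
    calc ∑ i, s i ≤ ∑ _i : Fin n, (1 - (C ^ 2)⁻¹) := Finset.sum_le_sum fun i _ => hpoint i
    _ = n * (1 - (C ^ 2)⁻¹) := by simp [mul_comm]; ring
  have hnm : (n : ℝ) ≤ (d : ℝ) + m := by exact_mod_cast hrank
  have hinv : (0:ℝ) < (C ^ 2)⁻¹ := by positivity
  nlinarith [hfinal, hnm, mul_nonneg (Nat.cast_nonneg n) hinv.le]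
end

section
/- Let C ≥ 1 be a real number and let m, n be positive integers with n ≥ (log 6)²·m. Suppose there exists an integer s with 1 ≤ s ≤ e·n/(16·C²) and C·s·log(e·n/s) ≤ m, and let k₀ be the largest such integer. Then m ≤ 20·C²·k₀·log(e·n/m). -/
set_option maxHeartbeats 800000


open Real

/-- inequality `eqn: k_0`: let `C ≥ 1`, `n ≥ (log 6)²·m`, and let `k₀` be the
largest integer `s` with `1 ≤ s ≤ e·n/(16C²)` and `C·s·log(e·n/s) ≤ m`. Then
`m ≤ 20·C²·k₀·log(e·n/m)`. -/
theorem stmt17 (C : ℝ) (hC : 1 ≤ C) (m n : ℕ) (hm : 0 < m) (hn : 0 < n)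
    (hnm : (Real.log 6) ^ 2 * m ≤ n) (k₀ : ℕ)
    (hk₀1 : 1 ≤ k₀)
    (hk₀2 : (k₀ : ℝ) ≤ Real.exp 1 * n / (16 * C ^ 2))
    (hk₀3 : C * k₀ * Real.log (Real.exp 1 * n / k₀) ≤ m)
    (hk₀max : ∀ s : ℕ, 1 ≤ s → (s : ℝ) ≤ Real.exp 1 * n / (16 * C ^ 2) →
      C * s * Real.log (Real.exp 1 * n / s) ≤ m → s ≤ k₀) :
    (m : ℝ) ≤ 20 * C ^ 2 * k₀ * Real.log (Real.exp 1 * n / m) := by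
  have hC0 : (0:ℝ) < C := lt_of_lt_of_le one_pos hC
  have hm0 : (0:ℝ) < m := by exact_mod_cast hm
  have hn0 : (0:ℝ) < n := by exact_mod_cast hn
  have hk0 : (1:ℝ) ≤ k₀ := by exact_mod_cast hk₀1
  have hE1 : (2.7:ℝ) < Real.exp 1 := by
    have := Real.exp_one_gt_d9; linarith
  have hE2 : Real.exp 1 < 2.72 := by
    have := Real.exp_one_lt_d9; linarith
  have hE0 : (0:ℝ) < Real.exp 1 := Real.exp_pos 1
  have hlog2 : (0.69:ℝ) < Real.log 2 := by
    have := Real.log_two_gt_d9; linarith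
  -- m ≤ n
  have hlog6 : (1:ℝ) ≤ Real.log 6 := by
    rw [show (1:ℝ) = Real.log (Real.exp 1) from (Real.log_exp 1).symm]
    exact Real.log_le_log hE0 (by linarith)
  have hmn : (m:ℝ) ≤ n := by nlinarith [sq_nonneg (Real.log 6 - 1)]
  -- log y ≥ 1 where y = e n / m
  have hy0 : (0:ℝ) < Real.exp 1 * n / m := by positivity
  have hylb : Real.exp 1 ≤ Real.exp 1 * n / m := by
    rw [le_div_iff₀ hm0]; nlinarith
  have hlogy1 : (1:ℝ) ≤ Real.log (Real.exp 1 * n / m) := by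
    calc (1:ℝ) = Real.log (Real.exp 1) := (Real.log_exp 1).symm
    _ ≤ _ := Real.log_le_log hE0 hylb
  set L : ℝ := Real.log (Real.exp 1 * n / m) with hLdef
  clear_value L
  by_cases hcase : ((k₀:ℝ)+1) ≤ Real.exp 1 * n / (16 * C ^ 2)
  · -- Case B: the log condition must fail at k₀+1
    have hB : ¬ (C * ((k₀+1 : ℕ):ℝ) * Real.log (Real.exp 1 * n / ((k₀+1 : ℕ):ℝ)) ≤ m) := by
      intro hle
      have := hk₀max (k₀+1) (by omega) (by push_cast; linarith) hle
      omega
    push_neg at hB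
    push_cast at hB
    set s : ℝ := (k₀:ℝ) + 1 with hs
    have hs0 : (0:ℝ) < s := by positivity
    set x : ℝ := Real.exp 1 * n / s with hxdef
    have hx0 : (0:ℝ) < x := by positivity
    -- x ≥ 16 C²
    have hxlb : 16 * C ^ 2 ≤ x := by
      rw [hxdef, le_div_iff₀ hs0]
      rw [le_div_iff₀ (by positivity : (0:ℝ) < 16 * C ^ 2)] at hcase
      linarith
    set t : ℝ := Real.log x with htdef
    have hlogC : (0:ℝ) ≤ Real.log C := Real.log_nonneg hC
    have htlb : 4 * Real.log 2 + 2 * Real.log C ≤ t := by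
      rw [htdef]
      calc 4 * Real.log 2 + 2 * Real.log C
          = Real.log (16 * C ^ 2) := by
            rw [Real.log_mul (by norm_num) (by positivity),
              show (16:ℝ) = 2 ^ 4 by norm_num, Real.log_pow, Real.log_pow]
            push_cast; ring
        _ ≤ Real.log x := Real.log_le_log (by positivity) hxlb
    have ht0 : (0:ℝ) < t := by linarith
    -- log t ≤ 2t/5
    have hlogt : Real.log t ≤ 2 * t / 5 := by
      have h1 : Real.log (t / Real.exp 1) ≤ t / Real.exp 1 - 1 :=
        Real.log_le_sub_one_of_pos (by positivity)
      rw [Real.log_div (ne_of_gt ht0) (ne_of_gt hE0), Real.log_exp] at h1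
      have h2 : t / Real.exp 1 ≤ 2 * t / 5 := by
        rw [div_le_div_iff₀ hE0 (by norm_num)]
        nlinarith
      linarith
    -- from hB : m < C * s * t
    have hBm : (m:ℝ) < C * s * t := hB
    -- e n / m > x / (C * t)
    have hdiv : x / (C * t) < Real.exp 1 * n / m := by
      have h1 : Real.exp 1 * n / (C * s * t) < Real.exp 1 * n / m :=
        div_lt_div_of_pos_left (by positivity) hm0 hBm
      have h2 : x / (C * t) = Real.exp 1 * n / (C * s * t) := by
        rw [hxdef]; field_simp
      linarith [h2 ▸ h1]
    have hlogdiv : t - (Real.log C + Real.log t) < L := by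
      have h1 : Real.log (x / (C * t)) < Real.log (Real.exp 1 * n / m) :=
        Real.log_lt_log (by positivity) hdiv
      rw [Real.log_div (ne_of_gt hx0) (by positivity),
        Real.log_mul (ne_of_gt hC0) (ne_of_gt ht0), ← hLdef] at h1
      linarith
    -- conclude t < 10 * L
    have hkey : t < 10 * L := by linarith
    have hL0 : (0:ℝ) < L := by linarith
    -- finish: m < C s t ≤ 2 C k₀ t ≤ 20 C k₀ L ≤ 20 C² k₀ L
    have e1 : C * s * t ≤ 2 * C * (k₀:ℝ) * t := by nlinarith [mul_pos hC0 ht0]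
    have e2 : 2 * C * (k₀:ℝ) * t ≤ 2 * C * (k₀:ℝ) * (10 * L) :=
      mul_le_mul_of_nonneg_left hkey.le (by positivity)
    have e3 : 20 * C * (k₀:ℝ) * L ≤ 20 * C ^ 2 * (k₀:ℝ) * L := by
      nlinarith [mul_pos (mul_pos hC0 (lt_of_lt_of_le one_pos hk0)) hL0]
    linarith
  · -- Case A: e n / (16 C²) < k₀ + 1 ≤ 2 k₀
    push_neg at hcase
    rw [div_lt_iff₀ (by positivity : (0:ℝ) < 16 * C ^ 2)] at hcase
    have h1 : Real.exp 1 * n < 32 * C ^ 2 * k₀ := by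
      nlinarith [mul_nonneg (sub_nonneg.2 hk0) (by positivity : (0:ℝ) ≤ 16 * C ^ 2)]
    have h2 : (m:ℝ) ≤ 20 * C ^ 2 * k₀ := by
      nlinarith [mul_pos hn0 (sub_pos.2 hE1)]
    have h3 : 20 * C ^ 2 * (k₀:ℝ) * 1 ≤ 20 * C ^ 2 * (k₀:ℝ) * L :=
      mul_le_mul_of_nonneg_left hlogy1 (by positivity)
    linarith
end

section
/- There exist universal constants c̃₀ > 0 and c̃₁ > 0 such that the following holds for all positive integers m ≤ n and every fixed z ∈ ℝ^n. If A ∈ ℝ^{m×n} is a standard Gaussian random matrix, then with probability at least 1 − 2·exp(−c̃₀·m) − 2m·exp(−c̃₁·m/log(en/m)), both (1/√m)·‖Az‖₂ ≤ √(3/2)·‖z‖₂ and (1/√m)·‖Az‖_∞ ≤ ‖z‖₂/√(log(en/m)) hold. -/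
open MeasureTheory ProbabilityTheory Real Finset

/-- The law of a standard Gaussian random matrix `A ∈ ℝ^{m×n}`: the product over the `m·n`
entries of the real Gaussian measure with mean `0` and variance `1`. -/
noncomputable def gaussMatrixReal (m n : ℕ) : Measure (Fin m → Fin n → ℝ) :=
  Measure.pi fun _ : Fin m => Measure.pi fun _ : Fin n => gaussianReal 0 1



open scoped ENNReal NNReal

lemma pdf_mul_exp_lin (t x : ℝ) :
    gaussianPDFReal 0 1 x * Real.exp (t * x)
      = Real.exp (t ^ 2 / 2) * gaussianPDFReal t 1 x := by
  simp only [gaussianPDFReal, sub_zero, NNReal.coe_one, mul_one]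
  rw [mul_assoc, ← Real.exp_add, mul_comm (Real.exp (t ^ 2 / 2)), mul_assoc, ← Real.exp_add]
  ring_nf

lemma gauss_lint_exp (t : ℝ) :
    ∫⁻ x, ENNReal.ofReal (Real.exp (t * x)) ∂(gaussianReal 0 1)
      = ENNReal.ofReal (Real.exp (t ^ 2 / 2)) := by
  rw [gaussianReal_of_var_ne_zero 0 one_ne_zero,
    lintegral_withDensity_eq_lintegral_mul _ (measurable_gaussianPDF 0 1)
      (by fun_prop)]
  have : ∀ x, (gaussianPDF 0 1 * fun x => ENNReal.ofReal (Real.exp (t * x))) x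
      = ENNReal.ofReal (Real.exp (t ^ 2 / 2)) * ENNReal.ofReal (gaussianPDFReal t 1 x) := by
    intro x
    simp only [Pi.mul_apply, gaussianPDF, ← ENNReal.ofReal_mul (gaussianPDFReal_nonneg 0 1 x)]
    rw [pdf_mul_exp_lin, ENNReal.ofReal_mul (Real.exp_nonneg _)]
  simp_rw [this]
  rw [lintegral_const_mul _ ((measurable_gaussianPDFReal t 1).ennreal_ofReal), lintegral_gaussianPDFReal_eq_one t one_ne_zero,
    mul_one]

lemma pdf_mul_exp_sq (x : ℝ) :
    gaussianPDFReal 0 1 x * Real.exp (x ^ 2 / 4)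
      = Real.sqrt 2 * gaussianPDFReal 0 2 x := by
  simp only [gaussianPDFReal, sub_zero, NNReal.coe_one, NNReal.coe_ofNat, mul_one]
  rw [mul_assoc, ← Real.exp_add]
  rw [show -x ^ 2 / 2 + x ^ 2 / 4 = -x ^ 2 / (2 * 2) by ring, ← mul_assoc]
  congr 1
  have h4 : Real.sqrt (2 * 2 * π) = 2 * Real.sqrt π := by
    rw [show (2 : ℝ) * 2 * π = 2 ^ 2 * π by ring, Real.sqrt_mul (by positivity),
      Real.sqrt_sq (by norm_num)]
  have h5 : Real.sqrt 2 * Real.sqrt 2 = 2 := Real.mul_self_sqrt (by norm_num)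
  have hπ : Real.sqrt π ≠ 0 := ne_of_gt (Real.sqrt_pos.2 Real.pi_pos)
  have h2 : Real.sqrt 2 ≠ 0 := by positivity
  rw [show (2 : ℝ) * π * 2 = 2 * 2 * π by ring, h4]
  field_simp
  rw [Real.sqrt_mul (by norm_num : (0:ℝ) ≤ 2) π]
  have h6 : Real.sqrt 2 * Real.sqrt 2 * Real.sqrt π = 2 * Real.sqrt π := by rw [h5]
  nlinarith [h5, Real.sqrt_nonneg π, h6]

lemma gauss_lint_sq :
    ∫⁻ x, ENNReal.ofReal (Real.exp (x ^ 2 / 4)) ∂(gaussianReal 0 1)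
      = ENNReal.ofReal (Real.sqrt 2) := by
  rw [gaussianReal_of_var_ne_zero 0 one_ne_zero,
    lintegral_withDensity_eq_lintegral_mul _ (measurable_gaussianPDF 0 1)
      (by fun_prop)]
  have : ∀ x, (gaussianPDF 0 1 * fun x => ENNReal.ofReal (Real.exp (x ^ 2 / 4))) x
      = ENNReal.ofReal (Real.sqrt 2) * ENNReal.ofReal (gaussianPDFReal 0 2 x) := by
    intro x
    simp only [Pi.mul_apply, gaussianPDF, ← ENNReal.ofReal_mul (gaussianPDFReal_nonneg 0 1 x)]
    rw [pdf_mul_exp_sq, ENNReal.ofReal_mul (Real.sqrt_nonneg _)]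
  simp_rw [this]
  rw [lintegral_const_mul _ ((measurable_gaussianPDFReal 0 2).ennreal_ofReal), lintegral_gaussianPDFReal_eq_one 0 (by norm_num),
    mul_one]

lemma lintegral_pi_prod {α : Type*} [MeasurableSpace α] {μ : Measure α} [SigmaFinite μ]
    {n : ℕ} (f : Fin n → α → ℝ≥0∞) (hf : ∀ i, Measurable (f i)) :
    ∫⁻ x, ∏ i, f i (x i) ∂(Measure.pi fun _ : Fin n => μ)
      = ∏ i, ∫⁻ y, f i y ∂μ := by
  induction n with
  | zero => simp [lintegral_const, Measure.pi_univ]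
  | succ n ih =>
    have hmeas : Measurable fun x : Fin n → α => ∏ j, f j.succ (x j) :=
      Finset.measurable_prod _ fun j _ => (hf j.succ).comp (measurable_pi_apply j)
    have key := (measurePreserving_piFinSuccAbove (fun _ : Fin (n + 1) => μ) 0).lintegral_comp_emb
      (MeasurableEquiv.measurableEmbedding _)
      (fun p : α × (Fin n → α) => f 0 p.1 * ∏ j, f j.succ (p.2 j))
    simp only [MeasurableEquiv.piFinSuccAbove, MeasurableEquiv.coe_mk,
      Fin.insertNthEquiv_symm_apply, Fin.removeNth_zero, Fin.tail_def] at key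
    calc ∫⁻ x, ∏ i, f i (x i) ∂(Measure.pi fun _ : Fin (n + 1) => μ)
        = ∫⁻ x, f 0 (x 0) * ∏ j : Fin n, f j.succ (x j.succ)
            ∂(Measure.pi fun _ : Fin (n + 1) => μ) := by
          simp_rw [Fin.prod_univ_succ]
      _ = ∫⁻ p : α × (Fin n → α), f 0 p.1 * ∏ j, f j.succ (p.2 j)
            ∂(μ.prod (Measure.pi fun _ : Fin n => μ)) := key
      _ = (∫⁻ y, f 0 y ∂μ) * ∫⁻ x, ∏ j, f j.succ (x j) ∂(Measure.pi fun _ : Fin n => μ) :=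
          lintegral_prod_mul (hf 0).aemeasurable hmeas.aemeasurable
      _ = ∏ i, ∫⁻ y, f i y ∂μ := by rw [ih _ fun j => hf j.succ, Fin.prod_univ_succ]

lemma lint_pi_exp_lin {n : ℕ} (z : Fin n → ℝ) (t : ℝ) :
    ∫⁻ x : Fin n → ℝ, ENNReal.ofReal (Real.exp (t * ∑ j, x j * z j))
        ∂(Measure.pi fun _ : Fin n => gaussianReal 0 1)
      = ENNReal.ofReal (Real.exp (t ^ 2 * (∑ j, z j ^ 2) / 2)) := by
  have hpt : ∀ x : Fin n → ℝ, ENNReal.ofReal (Real.exp (t * ∑ j, x j * z j))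
      = ∏ j, ENNReal.ofReal (Real.exp ((t * z j) * x j)) := by
    intro x
    rw [← ENNReal.ofReal_prod_of_nonneg (fun _ _ => Real.exp_nonneg _), ← Real.exp_sum,
      Finset.mul_sum]
    congr 2
    exact Finset.sum_congr rfl fun j _ => by ring
  simp_rw [hpt]
  rw [lintegral_pi_prod (fun j y => ENNReal.ofReal (Real.exp ((t * z j) * y)))
    (fun j => (measurable_id'.const_mul _).exp.ennreal_ofReal)]
  simp_rw [gauss_lint_exp]
  rw [← ENNReal.ofReal_prod_of_nonneg (fun _ _ => Real.exp_nonneg _), ← Real.exp_sum]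
  congr 1
  have h : ∀ j : Fin n, (t * z j) ^ 2 / 2 = t ^ 2 * z j ^ 2 / 2 := fun j => by ring
  simp_rw [h, ← Finset.sum_div, ← Finset.mul_sum]

lemma lint_pi_exp_sq {n : ℕ} (z : Fin n → ℝ) (hV : 0 < ∑ j, z j ^ 2) :
    ∫⁻ x : Fin n → ℝ, ENNReal.ofReal (Real.exp ((∑ j, x j * z j) ^ 2 / (4 * ∑ j, z j ^ 2)))
        ∂(Measure.pi fun _ : Fin n => gaussianReal 0 1)
      = ENNReal.ofReal (Real.sqrt 2) := by
  set V := ∑ j, z j ^ 2 with hVdef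
  set a := (Real.sqrt (2 * V))⁻¹ with ha
  have hVne : V ≠ 0 := ne_of_gt hV
  have ha2 : a ^ 2 = (2 * V)⁻¹ := by
    rw [ha, inv_pow, Real.sq_sqrt (by positivity)]
  have hpt : ∀ s : ℝ, ENNReal.ofReal (Real.exp (s ^ 2 / (4 * V)))
      = ∫⁻ w, ENNReal.ofReal (Real.exp ((a * s) * w)) ∂(gaussianReal 0 1) := by
    intro s
    rw [gauss_lint_exp, show (a * s) ^ 2 / 2 = s ^ 2 / (4 * V) from by
      rw [mul_pow, ha2, inv_mul_eq_div, div_div, show (2 * V * 2 : ℝ) = 4 * V from by ring]]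
  have hmeas : Measurable fun p : (Fin n → ℝ) × ℝ =>
      ENNReal.ofReal (Real.exp ((a * ∑ j, p.1 j * z j) * p.2)) := by
    have hs : Measurable fun p : (Fin n → ℝ) × ℝ => ∑ j, p.1 j * z j :=
      Finset.measurable_sum _ fun j _ => ((measurable_pi_apply j).comp measurable_fst).mul_const _
    exact (((hs.const_mul a).mul measurable_snd).exp).ennreal_ofReal
  calc ∫⁻ x : Fin n → ℝ, ENNReal.ofReal (Real.exp ((∑ j, x j * z j) ^ 2 / (4 * V)))
        ∂(Measure.pi fun _ : Fin n => gaussianReal 0 1)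
      = ∫⁻ x : Fin n → ℝ, ∫⁻ w, ENNReal.ofReal
          (Real.exp ((a * ∑ j, x j * z j) * w)) ∂(gaussianReal 0 1)
          ∂(Measure.pi fun _ : Fin n => gaussianReal 0 1) := by
        refine lintegral_congr fun x => ?_
        rw [hpt]
    _ = ∫⁻ w, ∫⁻ x : Fin n → ℝ, ENNReal.ofReal (Real.exp ((a * ∑ j, x j * z j) * w))
          ∂(Measure.pi fun _ : Fin n => gaussianReal 0 1) ∂(gaussianReal 0 1) :=
        lintegral_lintegral_swap hmeas.aemeasurable
    _ = ∫⁻ w, ENNReal.ofReal (Real.exp ((a * w) ^ 2 * V / 2)) ∂(gaussianReal 0 1) := by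
        refine lintegral_congr fun w => ?_
        rw [lintegral_congr (fun x : Fin n → ℝ => by
          rw [show (a * ∑ j, x j * z j) * w = (a * w) * ∑ j, x j * z j from by ring]),
          lint_pi_exp_lin z (a * w), ← hVdef]
    _ = ∫⁻ w, ENNReal.ofReal (Real.exp (w ^ 2 / 4)) ∂(gaussianReal 0 1) := by
        refine lintegral_congr fun w => ?_
        rw [show (a * w) ^ 2 * V / 2 = w ^ 2 / 4 from by
          rw [mul_pow, ha2]; field_simp; ring]
    _ = ENNReal.ofReal (Real.sqrt 2) := gauss_lint_sq

lemma meas_row {m n : ℕ} (z : Fin n → ℝ) (i : Fin m) :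
    Measurable fun A : Fin m → Fin n → ℝ => ∑ j, A i j * z j :=
  Finset.measurable_sum _ fun j _ =>
    ((measurable_pi_apply j).comp (measurable_pi_apply i)).mul_const _

lemma tail_sq {m n : ℕ} (z : Fin n → ℝ) (hV : 0 < ∑ j, z j ^ 2) :
    gaussMatrixReal m n
        {A | (3 / 2 : ℝ) * m * (∑ j, z j ^ 2) < ∑ i, (∑ j, A i j * z j) ^ 2}
      ≤ ENNReal.ofReal (Real.exp (-(3 / 8 - Real.log 2 / 2) * m)) := by
  set V := ∑ j, z j ^ 2 with hVdef
  have hVne : V ≠ 0 := ne_of_gt hV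
  set F : (Fin n → ℝ) → ℝ≥0∞ :=
    fun x => ENNReal.ofReal (Real.exp ((∑ j, x j * z j) ^ 2 / (4 * V))) with hF
  set f : (Fin m → Fin n → ℝ) → ℝ≥0∞ := fun A => ∏ i, F (A i) with hf
  have hFmeas : Measurable F := by
    apply Measurable.ennreal_ofReal
    apply Measurable.exp
    exact ((Finset.measurable_sum _ fun j _ =>
      (measurable_pi_apply j).mul_const _).pow_const 2).div_const _
  have hfmeas : Measurable f :=
    Finset.measurable_prod _ fun i _ => hFmeas.comp (measurable_pi_apply i)
  have hint : ∫⁻ A, f A ∂(gaussMatrixReal m n) = ENNReal.ofReal (Real.sqrt 2) ^ m := by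
    rw [hf, gaussMatrixReal]
    rw [lintegral_pi_prod (fun _ x => F x) (fun _ => hFmeas)]
    simp only [hF]
    rw [lint_pi_exp_sq z hV, Finset.prod_const, Finset.card_univ, Fintype.card_fin]
  have hfA : ∀ A : Fin m → Fin n → ℝ,
      f A = ENNReal.ofReal (Real.exp ((∑ i, (∑ j, A i j * z j) ^ 2) / (4 * V))) := by
    intro A
    rw [hf, hF]
    simp only
    rw [← ENNReal.ofReal_prod_of_nonneg (fun _ _ => Real.exp_nonneg _), ← Real.exp_sum,
      ← Finset.sum_div]
  set ε := ENNReal.ofReal (Real.exp ((3 : ℝ) / 8 * m)) with hε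
  have hε0 : ε ≠ 0 := by
    simp [hε, ENNReal.ofReal_eq_zero, not_le, Real.exp_pos]
  have hεtop : ε ≠ ⊤ := ENNReal.ofReal_ne_top
  have hsub : {A : Fin m → Fin n → ℝ | (3 / 2 : ℝ) * m * V < ∑ i, (∑ j, A i j * z j) ^ 2}
      ⊆ {A | ε ≤ f A} := by
    intro A hA
    simp only [Set.mem_setOf_eq] at hA ⊢
    rw [hfA, hε]
    apply ENNReal.ofReal_le_ofReal
    apply Real.exp_le_exp.2
    have h4V : (0 : ℝ) < 4 * V := by positivity
    rw [le_div_iff₀ h4V]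
    nlinarith
  have hmar := mul_meas_ge_le_lintegral₀ (μ := gaussMatrixReal m n) hfmeas.aemeasurable ε
  calc gaussMatrixReal m n {A | (3 / 2 : ℝ) * m * V < ∑ i, (∑ j, A i j * z j) ^ 2}
      ≤ gaussMatrixReal m n {A | ε ≤ f A} := measure_mono hsub
    _ = ε⁻¹ * (ε * gaussMatrixReal m n {A | ε ≤ f A}) := by
        rw [← mul_assoc, ENNReal.inv_mul_cancel hε0 hεtop, one_mul]
    _ ≤ ε⁻¹ * ∫⁻ A, f A ∂(gaussMatrixReal m n) := mul_le_mul_right hmar _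
    _ = ENNReal.ofReal (Real.exp (-(3 / 8 - Real.log 2 / 2) * m)) := by
        rw [hint, hε, ← ENNReal.ofReal_inv_of_pos (Real.exp_pos _), ← Real.exp_neg,
          ← ENNReal.ofReal_pow (Real.sqrt_nonneg 2),
          ← ENNReal.ofReal_mul (Real.exp_nonneg _)]
        congr 1
        have hsq : Real.sqrt 2 ^ m = Real.exp (m * (Real.log 2 / 2)) := by
          rw [← Real.log_sqrt (by norm_num : (0:ℝ) ≤ 2), ← Real.exp_log
            (Real.sqrt_pos.2 (by norm_num : (0:ℝ) < 2)), ← Real.exp_nat_mul, Real.log_exp]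
        rw [hsq, ← Real.exp_add]
        congr 1
        ring

lemma tail_lin {m n : ℕ} (i : Fin m) (z : Fin n → ℝ) (hV : 0 < ∑ j, z j ^ 2) {τ : ℝ}
    (hτ : 0 ≤ τ) :
    gaussMatrixReal m n {A | τ ≤ ∑ j, A i j * z j}
      ≤ ENNReal.ofReal (Real.exp (-(τ ^ 2 / (2 * ∑ j, z j ^ 2)))) := by
  set V := ∑ j, z j ^ 2 with hVdef
  have hVne : V ≠ 0 := ne_of_gt hV
  set θ : ℝ := τ / V with hθ
  have hθ0 : 0 ≤ θ := div_nonneg hτ hV.le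
  set F : Fin m → (Fin n → ℝ) → ℝ≥0∞ := fun i' x =>
    if i' = i then ENNReal.ofReal (Real.exp (θ * ∑ j, x j * z j)) else 1 with hF
  set f : (Fin m → Fin n → ℝ) → ℝ≥0∞ :=
    fun A => ENNReal.ofReal (Real.exp (θ * ∑ j, A i j * z j)) with hf
  have hFmeas : ∀ i', Measurable (F i') := by
    intro i'
    by_cases h : i' = i
    · simp only [hF, if_pos h]
      exact ((Finset.measurable_sum _ fun j _ =>
        (measurable_pi_apply j).mul_const _).const_mul θ).exp.ennreal_ofReal
    · simp only [hF, if_neg h]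
      exact measurable_const
  have hfmeas : Measurable f := ((meas_row z i).const_mul θ).exp.ennreal_ofReal
  have hint : ∫⁻ A, f A ∂(gaussMatrixReal m n)
      = ENNReal.ofReal (Real.exp (θ ^ 2 * V / 2)) := by
    have hprod : ∀ A : Fin m → Fin n → ℝ, f A = ∏ i', F i' (A i') := by
      intro A
      rw [hf]
      simp only [hF]
      rw [Finset.prod_ite_eq' Finset.univ i
        (fun i' => ENNReal.ofReal (Real.exp (θ * ∑ j, A i' j * z j))), if_pos (mem_univ i)]
    simp_rw [hprod]
    rw [gaussMatrixReal, lintegral_pi_prod F hFmeas]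
    have hone : ∀ i', (∫⁻ x, F i' x ∂(Measure.pi fun _ : Fin n => gaussianReal 0 1))
        = if i' = i then ENNReal.ofReal (Real.exp (θ ^ 2 * V / 2)) else 1 := by
      intro i'
      by_cases h : i' = i
      · simp only [hF, if_pos h]
        rw [lint_pi_exp_lin z θ, ← hVdef]
      · simp only [hF, if_neg h]
        simp
    simp_rw [hone]
    rw [Finset.prod_ite_eq' Finset.univ i
      (fun _ => ENNReal.ofReal (Real.exp (θ ^ 2 * V / 2))), if_pos (mem_univ i)]
  set ε := ENNReal.ofReal (Real.exp (θ * τ)) with hε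
  have hε0 : ε ≠ 0 := by simp [hε, ENNReal.ofReal_eq_zero, not_le, Real.exp_pos]
  have hεtop : ε ≠ ⊤ := ENNReal.ofReal_ne_top
  have hsub : {A : Fin m → Fin n → ℝ | τ ≤ ∑ j, A i j * z j} ⊆ {A | ε ≤ f A} := by
    intro A hA
    simp only [Set.mem_setOf_eq] at hA ⊢
    rw [hf, hε]
    exact ENNReal.ofReal_le_ofReal (Real.exp_le_exp.2 (mul_le_mul_of_nonneg_left hA hθ0))
  calc gaussMatrixReal m n {A | τ ≤ ∑ j, A i j * z j}
      ≤ gaussMatrixReal m n {A | ε ≤ f A} := measure_mono hsub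
    _ = ε⁻¹ * (ε * gaussMatrixReal m n {A | ε ≤ f A}) := by
        rw [← mul_assoc, ENNReal.inv_mul_cancel hε0 hεtop, one_mul]
    _ ≤ ε⁻¹ * ∫⁻ A, f A ∂(gaussMatrixReal m n) :=
        mul_le_mul_right (mul_meas_ge_le_lintegral₀ (μ := gaussMatrixReal m n) hfmeas.aemeasurable ε) _
    _ = ENNReal.ofReal (Real.exp (-(τ ^ 2 / (2 * V)))) := by
        rw [hint, hε, ← ENNReal.ofReal_inv_of_pos (Real.exp_pos _), ← Real.exp_neg,
          ← ENNReal.ofReal_mul (Real.exp_nonneg _), ← Real.exp_add]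
        congr 1
        rw [hθ]
        field_simp
        ring

lemma lpNorm_two_sqrt {ι : Type*} [Fintype ι] (y : ι → ℝ) :
    lpNorm 2 y = Real.sqrt (∑ i, y i ^ 2) := by
  rw [_root_.lpNorm, Real.sqrt_eq_rpow]
  congr 1
  refine Finset.sum_congr rfl fun i _ => ?_
  rw [Real.norm_eq_abs, show ((2 : ℝ)) = ((2 : ℕ) : ℝ) by norm_num, Real.rpow_natCast, sq_abs]

/-- Lemma `Gaussian_LQ`: for a fixed `z ∈ ℝ^n` and a standard Gaussian random
matrix `A ∈ ℝ^{m×n}`, with probability at least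
`1 - 2exp(-c̃₀ m) - 2m·exp(-c̃₁ m/log(en/m))`, one has
`(1/√m)‖Az‖₂ ≤ √(3/2)·‖z‖₂` and `(1/√m)‖Az‖_∞ ≤ ‖z‖₂/√(log(en/m))`. -/
theorem stmt18 :
    ∃ c₀ c₁ : ℝ, 0 < c₀ ∧ 0 < c₁ ∧
      ∀ m n : ℕ, 0 < m → m ≤ n →
        ∀ z : Fin n → ℝ,
          ENNReal.ofReal (1 - 2 * Real.exp (-c₀ * m)
              - 2 * m * Real.exp (-c₁ * m / Real.log (Real.exp 1 * n / m))) ≤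
            gaussMatrixReal m n
              {A : Fin m → Fin n → ℝ |
                (1 / Real.sqrt m) * lpNorm 2 (fun i => ∑ j, A i j * z j)
                    ≤ Real.sqrt (3 / 2) * lpNorm 2 z ∧
                (1 / Real.sqrt m) * (⨆ i : Fin m, |∑ j, A i j * z j|)
                    ≤ lpNorm 2 z / Real.sqrt (Real.log (Real.exp 1 * n / m))} := by
  refine ⟨3 / 8 - Real.log 2 / 2, 1 / 2, by nlinarith [Real.log_two_lt_d9], by norm_num, ?_⟩
  intro m n hm hmn z
  haveI : Nonempty (Fin m) := ⟨⟨0, hm⟩⟩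
  haveI : IsProbabilityMeasure (gaussMatrixReal m n) := by
    unfold gaussMatrixReal; infer_instance
  set c₀ : ℝ := 3 / 8 - Real.log 2 / 2 with hc₀
  set L : ℝ := Real.log (Real.exp 1 * n / m) with hL
  set V : ℝ := ∑ j, z j ^ 2 with hVdef
  have hm' : (0 : ℝ) < m := by exact_mod_cast hm
  have hL1 : 1 ≤ L := by
    rw [hL]
    calc (1 : ℝ) = Real.log (Real.exp 1) := (Real.log_exp 1).symm
      _ ≤ Real.log (Real.exp 1 * n / m) := by
          apply Real.log_le_log (Real.exp_pos 1)
          rw [mul_div_assoc, le_mul_iff_one_le_right (Real.exp_pos 1), le_div_iff₀ hm', one_mul]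
          exact_mod_cast hmn
  have hLpos : (0 : ℝ) < L := lt_of_lt_of_le one_pos hL1
  have hLne : L ≠ 0 := ne_of_gt hLpos
  have hσ : lpNorm 2 z = Real.sqrt V := lpNorm_two_sqrt z
  set S : Set (Fin m → Fin n → ℝ) :=
    {A : Fin m → Fin n → ℝ |
      (1 / Real.sqrt m) * lpNorm 2 (fun i => ∑ j, A i j * z j)
          ≤ Real.sqrt (3 / 2) * lpNorm 2 z ∧
      (1 / Real.sqrt m) * (⨆ i : Fin m, |∑ j, A i j * z j|)
          ≤ lpNorm 2 z / Real.sqrt L} with hS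
  have hbound_nonneg : (0 : ℝ) ≤ 2 * Real.exp (-c₀ * m) := by positivity
  have hbound_nonneg' : (0 : ℝ) ≤ 2 * m * Real.exp (-(1/2) * m / L) := by positivity
  by_cases hV0 : V = 0
  · -- z = 0 case
    have hz : ∀ j, z j = 0 := by
      intro j
      have h := (Finset.sum_eq_zero_iff_of_nonneg (fun j _ => sq_nonneg (z j))).1 hV0
      exact pow_eq_zero_iff (n := 2) (by norm_num) |>.1 (h j (mem_univ j))
    have hzero : ∀ (A : Fin m → Fin n → ℝ) i, (∑ j, A i j * z j) = 0 := by
      intro A i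
      exact Finset.sum_eq_zero fun j _ => by rw [hz j, mul_zero]
    have hSuniv : S = Set.univ := by
      apply Set.eq_univ_of_forall
      intro A
      simp only [hS, Set.mem_setOf_eq]
      have h1 : lpNorm 2 (fun i => ∑ j, A i j * z j) = 0 := by
        rw [lpNorm_two_sqrt]
        simp [hzero A]
      have h2 : lpNorm 2 z = 0 := by rw [hσ, hV0, Real.sqrt_zero]
      constructor
      · rw [h1, h2, mul_zero, mul_zero]
      · have : (⨆ i : Fin m, |∑ j, A i j * z j|) = 0 := by
          simp only [hzero A, abs_zero]
          exact ciSup_const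
        rw [this, h2, mul_zero, zero_div]
    rw [hSuniv, measure_univ]
    apply ENNReal.ofReal_le_one.2
    nlinarith [Real.exp_nonneg (-c₀ * m), Real.exp_nonneg (-(1/2 : ℝ) * m / L),
      mul_nonneg (mul_nonneg (by norm_num : (0:ℝ) ≤ 2) hm'.le)
        (Real.exp_nonneg (-(1/2 : ℝ) * m / L))]
  · have hV : 0 < V := lt_of_le_of_ne (Finset.sum_nonneg fun j _ => sq_nonneg _) (Ne.symm hV0)
    have hVne : V ≠ 0 := ne_of_gt hV
    set τ : ℝ := Real.sqrt m * Real.sqrt V / Real.sqrt L with hτdef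
    have hτ0 : 0 ≤ τ := by positivity
    have hsm : Real.sqrt m ≠ 0 := ne_of_gt (Real.sqrt_pos.2 hm')
    have hsL : Real.sqrt L ≠ 0 := ne_of_gt (Real.sqrt_pos.2 hLpos)
    set G₁ : Set (Fin m → Fin n → ℝ) :=
      {A | ∑ i, (∑ j, A i j * z j) ^ 2 ≤ (3 / 2 : ℝ) * m * V} with hG₁
    set G₂ : Set (Fin m → Fin n → ℝ) :=
      {A | ∀ i, |∑ j, A i j * z j| ≤ τ} with hG₂
    have hsub : G₁ ∩ G₂ ⊆ S := by
      rintro A ⟨h1, h2⟩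
      simp only [hS, Set.mem_setOf_eq]
      constructor
      · rw [lpNorm_two_sqrt, hσ]
        have hle : Real.sqrt (∑ i, (∑ j, A i j * z j) ^ 2)
            ≤ Real.sqrt ((3 / 2 : ℝ) * m * V) := Real.sqrt_le_sqrt h1
        calc (1 / Real.sqrt m) * Real.sqrt (∑ i, (∑ j, A i j * z j) ^ 2)
            ≤ (1 / Real.sqrt m) * Real.sqrt ((3 / 2 : ℝ) * m * V) := by
              apply mul_le_mul_of_nonneg_left hle (by positivity)
          _ = Real.sqrt (3 / 2) * Real.sqrt V := by
              rw [mul_assoc, Real.sqrt_mul (by norm_num : (0:ℝ) ≤ 3/2),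
                Real.sqrt_mul (Nat.cast_nonneg m)]
              field_simp
      · have hsup : (⨆ i : Fin m, |∑ j, A i j * z j|) ≤ τ := ciSup_le h2
        rw [hσ]
        calc (1 / Real.sqrt m) * (⨆ i : Fin m, |∑ j, A i j * z j|)
            ≤ (1 / Real.sqrt m) * τ := mul_le_mul_of_nonneg_left hsup (by positivity)
          _ = Real.sqrt V / Real.sqrt L := by
              rw [hτdef]; field_simp
    -- complement bound
    have hcompl_sub : Sᶜ ⊆ G₁ᶜ ∪ G₂ᶜ := by
      rw [← Set.compl_inter]
      exact Set.compl_subset_compl.2 hsub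
    have hτsq : τ ^ 2 / (2 * V) = (1 / 2 : ℝ) * m / L := by
      rw [hτdef, div_pow, mul_pow, Real.sq_sqrt hm'.le, Real.sq_sqrt hV.le,
        Real.sq_sqrt hLpos.le]
      field_simp
    have htail1 : gaussMatrixReal m n G₁ᶜ ≤ ENNReal.ofReal (Real.exp (-c₀ * m)) := by
      have : G₁ᶜ = {A : Fin m → Fin n → ℝ |
          (3 / 2 : ℝ) * m * V < ∑ i, (∑ j, A i j * z j) ^ 2} := by
        ext A
        simp [hG₁, not_le]
      rw [this]
      exact tail_sq z hV
    have htail_one : ∀ i : Fin m,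
        gaussMatrixReal m n {A | τ < |∑ j, A i j * z j|}
          ≤ ENNReal.ofReal (Real.exp (-((1/2 : ℝ) * m / L)))
            + ENNReal.ofReal (Real.exp (-((1/2 : ℝ) * m / L))) := by
      intro i
      have hsplit : {A : Fin m → Fin n → ℝ | τ < |∑ j, A i j * z j|}
          ⊆ {A | τ ≤ ∑ j, A i j * z j} ∪ {A | τ ≤ ∑ j, A i j * (-z j)} := by
        intro A hA
        simp only [Set.mem_setOf_eq, Set.mem_union] at hA ⊢
        rcases le_abs'.1 hA.le with h | h
        · right
          simp only [mul_neg, Finset.sum_neg_distrib]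
          linarith
        · left; exact h
      have hVneg : 0 < ∑ j, (-z j) ^ 2 := by
        simpa only [neg_sq] using hV
      have h2 := tail_lin i (fun j => -z j) hVneg hτ0
      simp only [neg_sq] at h2
      rw [← hVdef] at h2
      have h1 := tail_lin i z hV hτ0
      rw [← hVdef] at h1
      rw [hτsq] at h1 h2
      calc gaussMatrixReal m n {A | τ < |∑ j, A i j * z j|}
          ≤ gaussMatrixReal m n ({A | τ ≤ ∑ j, A i j * z j}
              ∪ {A | τ ≤ ∑ j, A i j * (-z j)}) := measure_mono hsplit
        _ ≤ gaussMatrixReal m n {A | τ ≤ ∑ j, A i j * z j}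
              + gaussMatrixReal m n {A | τ ≤ ∑ j, A i j * (-z j)} := measure_union_le _ _
        _ ≤ _ := add_le_add h1 h2
    have htail2 : gaussMatrixReal m n G₂ᶜ
        ≤ ENNReal.ofReal (2 * m * Real.exp (-(1/2 : ℝ) * m / L)) := by
      have hG₂c : G₂ᶜ ⊆ ⋃ i : Fin m, {A : Fin m → Fin n → ℝ | τ < |∑ j, A i j * z j|} := by
        intro A hA
        simp only [hG₂, Set.mem_compl_iff, Set.mem_setOf_eq, not_forall, not_le] at hA
        obtain ⟨i, hi⟩ := hA
        exact Set.mem_iUnion.2 ⟨i, hi⟩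
      calc gaussMatrixReal m n G₂ᶜ
          ≤ ∑' i : Fin m, gaussMatrixReal m n {A | τ < |∑ j, A i j * z j|} :=
            le_trans (measure_mono hG₂c) (measure_iUnion_le _)
        _ = ∑ i : Fin m, gaussMatrixReal m n {A | τ < |∑ j, A i j * z j|} := tsum_fintype _
        _ ≤ ∑ i : Fin m, (ENNReal.ofReal (Real.exp (-((1/2 : ℝ) * m / L)))
              + ENNReal.ofReal (Real.exp (-((1/2 : ℝ) * m / L)))) :=
            Finset.sum_le_sum fun i _ => htail_one i
        _ = ENNReal.ofReal (2 * m * Real.exp (-(1/2 : ℝ) * m / L)) := by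
            rw [Finset.sum_const, Finset.card_univ, Fintype.card_fin,
              ← ENNReal.ofReal_add (Real.exp_nonneg _) (Real.exp_nonneg _), nsmul_eq_mul,
              ← ENNReal.ofReal_natCast m, ← ENNReal.ofReal_mul (Nat.cast_nonneg m)]
            congr 1
            rw [show -((1/2 : ℝ) * m / L) = -(1/2 : ℝ) * m / L by ring]
            ring
    have hScompl : gaussMatrixReal m n Sᶜ
        ≤ ENNReal.ofReal (Real.exp (-c₀ * m))
          + ENNReal.ofReal (2 * m * Real.exp (-(1/2 : ℝ) * m / L)) :=
      calc gaussMatrixReal m n Sᶜ ≤ gaussMatrixReal m n (G₁ᶜ ∪ G₂ᶜ) := measure_mono hcompl_sub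
        _ ≤ gaussMatrixReal m n G₁ᶜ + gaussMatrixReal m n G₂ᶜ := measure_union_le _ _
        _ ≤ _ := add_le_add htail1 htail2
    have hmeasS : MeasurableSet S := by
      have hrw : S = {A : Fin m → Fin n → ℝ |
          (1 / Real.sqrt m) * Real.sqrt (∑ i, (∑ j, A i j * z j) ^ 2)
              ≤ Real.sqrt (3 / 2) * lpNorm 2 z}
          ∩ {A : Fin m → Fin n → ℝ |
          (1 / Real.sqrt m) * (⨆ i : Fin m, |∑ j, A i j * z j|)
              ≤ lpNorm 2 z / Real.sqrt L} := by
        ext A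
        simp only [hS, Set.mem_setOf_eq, Set.mem_inter_iff, lpNorm_two_sqrt]
      rw [hrw]
      apply MeasurableSet.inter
      · apply measurableSet_le _ measurable_const
        exact ((Real.continuous_sqrt.measurable.comp
          (Finset.measurable_sum _ fun i _ => (meas_row z i).pow_const 2)).const_mul _)
      · apply measurableSet_le _ measurable_const
        exact ((Measurable.iSup fun i => (meas_row z i).abs).const_mul _)
    have hSval : gaussMatrixReal m n S = 1 - gaussMatrixReal m n Sᶜ := by
      conv_lhs => rw [← compl_compl S]
      rw [prob_compl_eq_one_sub hmeasS.compl]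
    rw [hSval]
    calc ENNReal.ofReal (1 - 2 * Real.exp (-c₀ * m) - 2 * m * Real.exp (-(1/2 : ℝ) * m / L))
        ≤ ENNReal.ofReal (1 - (Real.exp (-c₀ * m) + 2 * m * Real.exp (-(1/2 : ℝ) * m / L))) := by
          apply ENNReal.ofReal_le_ofReal
          nlinarith [Real.exp_nonneg (-c₀ * m)]
      _ = 1 - (ENNReal.ofReal (Real.exp (-c₀ * m))
            + ENNReal.ofReal (2 * m * Real.exp (-(1/2 : ℝ) * m / L))) := by
          rw [ENNReal.ofReal_sub _ (by positivity), ENNReal.ofReal_one,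
            ENNReal.ofReal_add (Real.exp_nonneg _) (by positivity)]
      _ ≤ 1 - gaussMatrixReal m n Sᶜ := tsub_le_tsub_left hScompl 1
end
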